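/- Let R be a commutative ring with 1 and define a τ_z b iff ab = 0 on R^#. The following are equivalent: (1) R is a strong-τ_z-FFR, i.e., every nonunit of R has only finitely many nontrivial τ_z-factorizations up to rearrangement of the factors; (2) R is an integral domain, or R is finite and reduced; (3) R is an integral domain, or R is isomorphic to a direct product K₁ × ⋯ × Kₙ of finite fields with n ≥ 2. -/

import Mathlib

universe u

variable {R : Type u} [CommRing R]

/-- `a ∈ R^#`, i.e. `a` is a nonzero nonunit of `R`. -/
def IsNnu (a : R) : Prop :=
  a ≠ 0 ∧ ¬IsUnit a

/-- `a ∼ b` iff `(a) = (b)`. -/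
def RAssoc (a b : R) : Prop :=
  Ideal.span ({a} : Set R) = Ideal.span ({b} : Set R)

/-- `a ≈ b` iff `a = λ * b` for some unit `λ`. -/
def RSAssoc (a b : R) : Prop :=
  ∃ lam : Rˣ, a = (lam : R) * b

/-- `a ≅ b` iff `a ∼ b` and (`a = b = 0`, or whenever `a = r * b` then `r` is a unit). -/
def RVSAssoc (a b : R) : Prop :=
  RAssoc a b ∧ ((a = 0 ∧ b = 0) ∨ ∀ r : R, a = r * b → IsUnit r)

/-- `a = u * a₁ ⋯ aₙ` (with `l = [a₁, …, aₙ]`) is a `τ`-factorization of `a`: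
the list of factors is nonempty, all factors are nonunits, all factors are nonzero
except in the trivial `τ`-factorization `0 = u * 0` of `0`, and the factors are
pairwise related by `τ`. -/
def IsTauFact (τ : R → R → Prop) (u : Rˣ) (l : List R) (a : R) : Prop :=
  l ≠ [] ∧ (∀ x ∈ l, ¬IsUnit x) ∧ (∀ x ∈ l, x = 0 → l = [0]) ∧
    l.Pairwise τ ∧ a = (u : R) * l.prod

/-- `b` τ-divides `a`, i.e. `b` occurs as a factor in some τ-factorization of `a`. -/
def TauDvd (τ : R → R → Prop) (b a : R) : Prop :=
  ∃ (u : Rˣ) (l : List R), IsTauFact τ u l a ∧ b ∈ l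

/-- `a` is τ-irreducible: `a` is a nonunit and every τ-factorization of `a`
has a factor `∼ a`. -/
def TauIrreducible (τ : R → R → Prop) (a : R) : Prop :=
  ¬IsUnit a ∧ ∀ (u : Rˣ) (l : List R), IsTauFact τ u l a → ∃ x ∈ l, RAssoc a x

/-- `a` is τ-strongly irreducible: `a` is a nonunit and every τ-factorization of `a`
has a factor `≈ a`. -/
def TauSIrreducible (τ : R → R → Prop) (a : R) : Prop :=
  ¬IsUnit a ∧ ∀ (u : Rˣ) (l : List R), IsTauFact τ u l a → ∃ x ∈ l, RSAssoc a x

/-- `a` is τ-m-irreducible: `a` is a nonunit and in every τ-factorization of `a`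
every factor is `∼ a`. -/
def TauMIrreducible (τ : R → R → Prop) (a : R) : Prop :=
  ¬IsUnit a ∧ ∀ (u : Rˣ) (l : List R), IsTauFact τ u l a → ∀ x ∈ l, RAssoc a x

/-- `a` is τ-very strongly irreducible: `a` is a nonunit, `a ≅ a`, and `a` has
no nontrivial τ-factorizations. -/
def TauVSIrreducible (τ : R → R → Prop) (a : R) : Prop :=
  ¬IsUnit a ∧ RVSAssoc a a ∧ ∀ (u : Rˣ) (l : List R), IsTauFact τ u l a → l.length = 1

/-- `R` is τ-atomic: every nonunit has a τ-factorization into τ-irreducible factors. -/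
def TauAtomic (τ : R → R → Prop) : Prop :=
  ∀ a : R, ¬IsUnit a → ∃ (u : Rˣ) (l : List R),
    IsTauFact τ u l a ∧ ∀ x ∈ l, TauIrreducible τ x

/-- `τ` is refinable: replacing each factor of a τ-factorization by the factors of a
τ-factorization of it (absorbing the units into the leading unit) again yields a
τ-factorization. -/
def TauRefinable (τ : R → R → Prop) : Prop :=
  ∀ (a : R) (u : Rˣ) (l : List R), IsTauFact τ u l a →
    ∀ L : List (Rˣ × List R),
      List.Forall₂ (fun x p => IsTauFact τ p.1 p.2 x) l L →
      IsTauFact τ (u * (L.map Prod.fst).prod) (L.map Prod.snd).flatten a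

/-- `τ` is associate preserving. -/
def TauAssocPreserving (τ : R → R → Prop) : Prop :=
  ∀ a b b' : R, IsNnu b' → RAssoc b b' → τ a b → τ a b'

/-- `R` satisfies τ-ACCP: every ascending chain of principal ideals
`(a₀) ⊆ (a₁) ⊆ ⋯` with `a_{i+1} |_τ a_i` stabilizes. -/
def TauACCP (τ : R → R → Prop) : Prop :=
  ∀ f : ℕ → R,
    (∀ i, Ideal.span ({f i} : Set R) ≤ Ideal.span ({f (i + 1)} : Set R)) →
    (∀ i, TauDvd τ (f (i + 1)) (f i)) →
    ∃ N : ℕ, ∀ i, N ≤ i → Ideal.span ({f i} : Set R) = Ideal.span ({f N} : Set R)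

section AuxTauZ

lemma auxSqZero [Nontrivial R] :
    ∀ n (x : R), x ^ n = 0 → x ≠ 0 → ∃ y : R, y ≠ 0 ∧ y * y = 0 := by
  intro n
  induction n using Nat.strong_induction_on with
  | _ n ih =>
    match n, ih with
    | 0, _ => intro x hxn _; rw [pow_zero] at hxn; exact absurd hxn one_ne_zero
    | 1, _ => intro x hxn hx; rw [pow_one] at hxn; exact absurd hxn hx
    | (m+2), ih =>
      intro x hxn hx
      by_cases h : x ^ (m+1) = 0
      · exact ih (m+1) (by omega) x h hx
      · exact ⟨x ^ (m+1), h,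
          by rw [show x^(m+1)*x^(m+1) = x^(m+2)*x^m by ring, hxn, zero_mul]⟩

lemma auxNotUnit {a b : R} (hb : b ≠ 0) (hab : a * b = 0) : ¬IsUnit a :=
  fun ha => hb (ha.mul_left_cancel (hab.trans (mul_zero a).symm))

lemma auxPairMem {a x : R} (ha : a ≠ 0) (hx : x ≠ 0) (hax : a * x = 0) :
    (↑[a, x] : Multiset R) ∈ {s : Multiset R | ∃ (v : Rˣ) (l : List R),
      IsTauFact (fun p q : R => p * q = 0) v l (0 : R) ∧ 1 < l.length ∧
        (↑l : Multiset R) = s} := by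
  refine ⟨1, [a, x], ⟨by simp, ?_, ?_, ?_, ?_⟩, by simp, rfl⟩
  · intro z hz
    simp only [List.mem_cons, List.not_mem_nil, or_false, List.mem_singleton] at hz
    rcases hz with rfl | rfl
    · exact auxNotUnit hx hax
    · exact auxNotUnit ha (by rwa [mul_comm])
  · intro z hz hz0
    simp only [List.mem_cons, List.not_mem_nil, or_false, List.mem_singleton] at hz
    rcases hz with rfl | rfl
    · exact absurd hz0 ha
    · exact absurd hz0 hx
  · exact List.Pairwise.cons (by simpa using hax) (List.pairwise_singleton _ _)
  · simp [hax]

lemma auxZeroSetInfinite [Infinite R] {a b : R} (ha : a ≠ 0) (hb : b ≠ 0)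
    (hab : a * b = 0) :
    {s : Multiset R | ∃ (v : Rˣ) (l : List R),
      IsTauFact (fun p q : R => p * q = 0) v l (0 : R) ∧ 1 < l.length ∧
        (↑l : Multiset R) = s}.Infinite := by
  classical
  set φ : R → R := fun c => c * a with hφ
  by_cases hr : (Set.range φ).Finite
  · -- some fiber is infinite, giving an infinite annihilator of a
    haveI := hr.to_subtype
    obtain ⟨y, hy⟩ := Finite.exists_infinite_fiber
      (fun c : R => (⟨φ c, Set.mem_range_self c⟩ : Set.range φ))
    have hfib : ((fun c : R => (⟨φ c, Set.mem_range_self c⟩ : Set.range φ)) ⁻¹' {y}).Infinite :=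
      Set.infinite_coe_iff.mp hy
    obtain ⟨c₀, hc₀⟩ := hfib.nonempty
    have himg : ((fun c : R => c - c₀) ''
        ((fun c : R => (⟨φ c, Set.mem_range_self c⟩ : Set.range φ)) ⁻¹' {y})).Infinite :=
      hfib.image (fun p _ q _ h => by simpa using congrArg (· + c₀) h)
    have hA : {x : R | x * a = 0}.Infinite := by
      refine himg.mono ?_
      rintro _ ⟨c, hc, rfl⟩
      have h1 : φ c = φ c₀ := by
        have := (Set.mem_preimage.mp hc).trans (Set.mem_preimage.mp hc₀).symm
        exact Subtype.ext_iff.mp this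
      simp only [Set.mem_setOf_eq, sub_mul]
      simp only [hφ] at h1
      rw [h1, sub_self]
    have hA' : ({x : R | x * a = 0} \ {0}).Infinite := hA.diff (Set.finite_singleton 0)
    have hinj : Set.InjOn (fun x : R => (↑[a, x] : Multiset R)) ({x : R | x * a = 0} \ {0}) := by
      intro p _ q _ h
      have h' : (a ::ₘ ({p} : Multiset R)) = a ::ₘ ({q} : Multiset R) := h
      exact Multiset.singleton_inj.mp ((Multiset.cons_inj_right a).mp h')
    refine (hA'.image hinj).mono ?_
    rintro _ ⟨x, ⟨hx1, hx2⟩, rfl⟩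
    exact auxPairMem ha (by simpa using hx2) (by rw [mul_comm]; exact hx1)
  · -- the range of φ is infinite
    have hri : (Set.range φ).Infinite := hr
    have hT : ((Set.range φ) \ {0}).Infinite := hri.diff (Set.finite_singleton 0)
    have hinj : Set.InjOn (fun y : R => (↑[y, b] : Multiset R)) ((Set.range φ) \ {0}) := by
      intro p _ q _ h
      have h' : (p ::ₘ ({b} : Multiset R)) = q ::ₘ ({b} : Multiset R) := h
      exact (Multiset.cons_inj_left _).mp h'
    refine (hT.image hinj).mono ?_
    rintro _ ⟨y, ⟨⟨c, rfl⟩, hy2⟩, rfl⟩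
    refine auxPairMem (by simpa using hy2) hb ?_
    show c * a * b = 0
    rw [mul_assoc, hab, mul_zero]

lemma auxZeroSetInfiniteOfSq [Nontrivial R] {y : R} (hy : y ≠ 0) (hyy : y * y = 0) :
    {s : Multiset R | ∃ (v : Rˣ) (l : List R),
      IsTauFact (fun p q : R => p * q = 0) v l (0 : R) ∧ 1 < l.length ∧
        (↑l : Multiset R) = s}.Infinite := by
  refine Set.infinite_of_injective_forall_mem
    (f := fun n : ℕ => (↑(List.replicate (n+2) y) : Multiset R)) ?_ ?_
  · intro m n h
    have := congrArg Multiset.card h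
    simpa using this
  · intro n
    refine ⟨1, List.replicate (n+2) y, ⟨?_, ?_, ?_, ?_, ?_⟩, ?_, rfl⟩
    · simp [List.replicate_succ]
    · intro z hz
      rw [List.eq_of_mem_replicate hz]
      exact auxNotUnit hy hyy
    · intro z hz h0
      exact absurd ((List.eq_of_mem_replicate hz).symm.trans h0) hy
    · exact List.pairwise_replicate.mpr (Or.inr hyy)
    · rw [List.prod_replicate, Units.val_one, one_mul,
        show y^(n+2) = (y*y)*y^n by ring, hyy, zero_mul]
    · rw [List.length_replicate]; omega

end AuxTauZ

/-- For the relation `a τ_z b ↔ a * b = 0`, the following are equivalent: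
(1) `R` is a strong-τ_z-FFR: every nonunit has only finitely many nontrivial
    τ_z-factorizations up to rearrangement of the factors;
(2) `R` is an integral domain, or `R` is finite and reduced;
(3) `R` is an integral domain, or `R` is isomorphic to a direct product
    `K₁ × ⋯ × Kₙ` of finite fields with `n ≥ 2`. -/
theorem tauZ_strong_FFR_iff {R : Type u} [CommRing R] [Nontrivial R] :
    ((∀ a : R, ¬IsUnit a →
        {s : Multiset R | ∃ (v : Rˣ) (l : List R),
          IsTauFact (fun x y : R => x * y = 0) v l a ∧ 1 < l.length ∧
            (↑l : Multiset R) = s}.Finite) ↔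
      (IsDomain R ∨ (Finite R ∧ IsReduced R))) ∧
    ((IsDomain R ∨ (Finite R ∧ IsReduced R)) ↔
      (IsDomain R ∨ ∃ (n : ℕ) (K : Fin n → Type u) (fld : ∀ i, Field (K i)),
        letI := fld
        2 ≤ n ∧ (∀ i, Finite (K i)) ∧ Nonempty (R ≃+* ((i : Fin n) → K i)))) := by
  classical
  constructor
  · constructor
    · -- strong FFR → domain or (finite and reduced)
      intro h
      by_cases hd : IsDomain R
      · exact Or.inl hd
      right
      have hred : IsReduced R := by
        by_contra hnr
        rw [isReduced_iff] at hnr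
        push_neg at hnr
        obtain ⟨x, ⟨n, hxn⟩, hx⟩ := hnr
        obtain ⟨y, hy, hyy⟩ := auxSqZero n x hxn hx
        exact Set.not_infinite.mpr (h 0 not_isUnit_zero) (auxZeroSetInfiniteOfSq hy hyy)
      refine ⟨?_, hred⟩
      cases finite_or_infinite R with
      | inl hf => exact hf
      | inr hinf =>
        exfalso
        have hzd : ¬ ∀ x y : R, x * y = 0 → x = 0 ∨ y = 0 := by
          intro H
          exact hd (@NoZeroDivisors.to_isDomain R _ _ ⟨fun {p q} hpq => H p q hpq⟩)
        push_neg at hzd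
        obtain ⟨a, b, hab, ha, hb⟩ := hzd
        exact Set.not_infinite.mpr (h 0 not_isUnit_zero) (auxZeroSetInfinite ha hb hab)
    · -- domain or (finite and reduced) → strong FFR
      rintro (hd | ⟨hfin, hred⟩) a ha
      · refine Set.Finite.subset Set.finite_empty ?_
        rintro s ⟨v, l, ⟨hne, hnu, hz0, hpw, hprod⟩, hlen, rfl⟩
        exfalso
        cases l with
        | nil => exact hne rfl
        | cons x t =>
          cases t with
          | nil => simp at hlen
          | cons y t' =>
            have hxy : x * y = 0 := (List.pairwise_cons.mp hpw).1 y (by simp)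
            have hx : x ≠ 0 := by
              intro h0
              have := hz0 x (by simp) h0
              simp at this
            have hy : y ≠ 0 := by
              intro h0
              have := hz0 y (by simp) h0
              simp at this
            exact (mul_ne_zero hx hy) hxy
      · haveI := hfin
        haveI := hred
        haveI : Fintype R := Fintype.ofFinite R
        refine Set.Finite.subset (Set.finite_range (fun t : Finset R => (t.val : Multiset R))) ?_
        rintro s ⟨v, l, ⟨hne, hnu, hz0, hpw, hprod⟩, hlen, rfl⟩
        have hz : ∀ x ∈ l, x ≠ 0 := by
          intro x hx h0
          have := hz0 x hx h0
          rw [this] at hlen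
          simp at hlen
        have hnd : l.Nodup := by
          refine List.Pairwise.imp_of_mem ?_ hpw
          intro p q hp hq hpq heq
          subst heq
          exact hz p hp (IsNilpotent.eq_zero ⟨2, by rw [pow_two]; exact hpq⟩)
        refine ⟨(↑l : Multiset R).toFinset, ?_⟩
        show (↑l : Multiset R).toFinset.val = (↑l : Multiset R)
        rw [Multiset.toFinset_val, Multiset.dedup_eq_self.mpr (Multiset.coe_nodup.mpr hnd)]
  · constructor
    · -- (2) → (3)
      rintro (hd | ⟨hfin, hred⟩)
      · exact Or.inl hd
      by_cases hdo : IsDomain R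
      · exact Or.inl hdo
      right
      haveI := hfin
      haveI := hred
      haveI : IsArtinianRing R := isArtinian_of_finite
      haveI := (IsArtinianRing.setOfPred_isMaximal_finite R).to_subtype
      let eqv : MaximalSpectrum R ≃ {I : Ideal R | I.IsMaximal} :=
        ⟨fun m => ⟨m.asIdeal, m.isMaximal⟩, fun I => ⟨I.1, I.2⟩, fun _ => rfl, fun _ => rfl⟩
      let E : R ≃+* ((I : {I : Ideal R | I.IsMaximal}) → R ⧸ I.1) :=
        (IsArtinianRing.equivPi R).toRingEquiv.trans
          (RingEquiv.piCongrLeft (fun I : {I : Ideal R | I.IsMaximal} => R ⧸ I.1) eqv)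
      haveI : Fintype {I : Ideal R | I.IsMaximal} := Fintype.ofFinite _
      obtain ⟨I₀, hI₀⟩ := Ideal.exists_maximal R
      have hcard : 2 ≤ Fintype.card {I : Ideal R | I.IsMaximal} := by
        by_contra hc
        push_neg at hc
        have hc' : Fintype.card {I : Ideal R | I.IsMaximal} = 0 ∨
            Fintype.card {I : Ideal R | I.IsMaximal} = 1 := by omega
        rcases hc' with h1 | h1
        · exact (Fintype.card_eq_zero_iff.mp h1).false ⟨I₀, hI₀⟩
        · obtain ⟨u⟩ := Fintype.card_eq_one_iff_nonempty_unique.mp h1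
          haveI := u
          haveI : (default : {I : Ideal R | I.IsMaximal}).1.IsMaximal :=
            (default : {I : Ideal R | I.IsMaximal}).2
          letI : Field (R ⧸ (default : {I : Ideal R | I.IsMaximal}).1) :=
            Ideal.Quotient.field _
          exact hdo (MulEquiv.isDomain _
            (E.toMulEquiv.trans (MulEquiv.piUnique _)))
      set e := (Fintype.equivFin {I : Ideal R | I.IsMaximal}).symm with he
      refine ⟨Fintype.card {I : Ideal R | I.IsMaximal},
        fun i => R ⧸ ((e i : Ideal R)),
        fun i => @Ideal.Quotient.field R _ (e i : Ideal R) (e i).2,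
        hcard,
        fun i => Finite.of_surjective (Ideal.Quotient.mk _) Ideal.Quotient.mk_surjective,
        ⟨E.trans
          (RingEquiv.piCongrLeft (fun I : {I : Ideal R | I.IsMaximal} => R ⧸ I.1) e).symm⟩⟩
    · -- (3) → (2)
      rintro (hd | ⟨n, K, fld, hcond⟩)
      · exact Or.inl hd
      right
      letI := fld
      obtain ⟨hn, hKfin, ⟨e⟩⟩ := hcond
      haveI : ∀ i, Finite (K i) := hKfin
      refine ⟨Finite.of_equiv _ e.symm.toEquiv, ?_⟩
      exact isReduced_of_injective e.toRingHom e.injective
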